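/- Let G ∈ ℝ^{m×k} and g_{k+1} ∈ ℝ^m with rank([G g_{k+1}]) = k+1. Denote by s(G', b') the unique solution of min_{y ≥ 0} ‖G' y − b'‖ for any full-column-rank G' and vector b'. Then the unique solution (y*, y*_{k+1}) of min_{y ≥ 0, y_{k+1} ≥ 0} ‖G y + g_{k+1} y_{k+1} − b‖ satisfies y*_{k+1} = (1/‖g_{k+1}‖²)·[g_{k+1}ᵀ(b − G·s(G̃, b̃))]₊ and y* = s(G, b − g_{k+1} y*_{k+1}), where G̃ = (I − g_{k+1} g_{k+1}ᵀ/‖g_{k+1}‖²)G and b̃ = (I − g_{k+1} g_{k+1}ᵀ/‖g_{k+1}‖²)b. -/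

import Mathlib

open scoped RealInnerProductSpace


lemma kkt {m k : ℕ} (G' : Fin k → EuclideanSpace ℝ (Fin m)) (b' : EuclideanSpace ℝ (Fin m))
    (z₀ : Fin k → ℝ) (hz₀ : ∀ i, 0 ≤ z₀ i)
    (hmin : ∀ z : Fin k → ℝ, (∀ i, 0 ≤ z i) →
      ‖(∑ i, z₀ i • G' i) - b'‖ ≤ ‖(∑ i, z i • G' i) - b'‖)
    (hne : ∀ i, G' i ≠ 0) (i : Fin k) :
    0 ≤ ⟪G' i, (∑ j, z₀ j • G' j) - b'⟫ ∧ z₀ i * ⟪G' i, (∑ j, z₀ j • G' j) - b'⟫ = 0 := by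
  set R := (∑ j, z₀ j • G' j) - b' with hR
  set a := ⟪G' i, R⟫ with ha
  set N := ‖G' i‖^2 with hN
  have hNpos : 0 < N := pow_pos (norm_pos_iff.mpr (hne i)) 2
  have hsum : ∀ t : ℝ, (∑ j, (z₀ j + if j = i then t else 0) • G' j) - b' = R + t • G' i := by
    intro t
    have e1 : (∑ j, (z₀ j + if j = i then t else 0) • G' j)
        = (∑ j, z₀ j • G' j) + ∑ j, (if j = i then t else 0) • G' j := by
      rw [← Finset.sum_add_distrib]
      exact Finset.sum_congr rfl fun j _ => by rw [add_smul]
    rw [e1]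
    have e2 : (∑ j, (if j = i then t else 0) • G' j) = t • G' i := by
      rw [Finset.sum_eq_single i]
      · simp
      · intro j _ hj; simp [hj]
      · simp
    rw [e2, hR]; abel
  have key : ∀ t : ℝ, (∀ j, (0:ℝ) ≤ z₀ j + if j = i then t else 0) →
      0 ≤ 2*t*a + t^2*N := by
    intro t hfeas
    have h1 := hmin (fun j => z₀ j + if j = i then t else 0) hfeas
    rw [hsum t] at h1
    have h2 : ‖R‖^2 ≤ ‖R + t • G' i‖^2 := by
      have := norm_nonneg R
      nlinarith
    have h3 : ‖R + t • G' i‖^2 = ‖R‖^2 + 2 * ⟪R, t • G' i⟫ + ‖t • G' i‖^2 :=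
      norm_add_sq_real R (t • G' i)
    have h4 : ⟪R, t • G' i⟫ = t * a := by
      rw [real_inner_smul_right, real_inner_comm]
    have h5 : ‖t • G' i‖^2 = t^2 * N := by
      rw [norm_smul]; simp [hN, mul_pow]
    nlinarith
  have hpos : 0 ≤ a := by
    by_contra hlt
    push_neg at hlt
    have ht : 0 < -a/N := div_pos (neg_pos.mpr hlt) hNpos
    have hfeas : ∀ j, (0:ℝ) ≤ z₀ j + if j = i then -a/N else 0 := by
      intro j
      have := hz₀ j
      split <;> linarith
    have hk := key (-a/N) hfeas
    have h7 : 2*(-a/N)*a + (-a/N)^2*N = -(a^2/N) := by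
      field_simp; ring
    rw [h7] at hk
    have h8 : a^2/N ≤ 0 := by linarith
    have h9 : a^2 ≤ 0 * N := (div_le_iff₀ hNpos).mp h8
    nlinarith
  refine ⟨hpos, ?_⟩
  rcases eq_or_lt_of_le (hz₀ i) with h0 | h0
  · rw [← h0]; ring
  have hle : a ≤ 0 := by
    by_contra hgt
    push_neg at hgt
    set t := -min (z₀ i) (a/N) with ht
    have htneg : t < 0 := by
      rw [ht]; simp only [neg_neg, Left.neg_neg_iff]
      exact lt_min h0 (div_pos hgt hNpos)
    have htz : -t ≤ z₀ i := by rw [ht]; simp [min_le_left]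
    have hta : -t ≤ a/N := by rw [ht]; simp [min_le_right]
    have hfeas : ∀ j, (0:ℝ) ≤ z₀ j + if j = i then t else 0 := by
      intro j
      split
      · next h => subst h; linarith
      · simp [hz₀ j]
    have hk := key t hfeas
    have h6 : -t * N ≤ a := (le_div_iff₀ hNpos).mp hta
    nlinarith
  have : a = 0 := le_antisymm hle hpos
  rw [this]; ring

set_option maxHeartbeats 1000000 in
/-- Recursive formula for rank-(k+1) NLS: with s(G', b') denoting the unique
nonnegative least squares solution for a full-column-rank G', the unique solution
(y*, y*_{k+1}) of min_{y ≥ 0, y_{k+1} ≥ 0} ‖G y + g y_{k+1} − b‖ is given by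
y*_{k+1} = [gᵀ(b − G·s(G̃, b̃))]₊/‖g‖² and y* = s(G, b − g y*_{k+1}), where
G̃ = (I − g gᵀ/‖g‖²)G and b̃ = (I − g gᵀ/‖g‖²)b. -/
theorem stmt6 {m k : ℕ} (G : Fin k → EuclideanSpace ℝ (Fin m))
    (g : EuclideanSpace ℝ (Fin m)) (b : EuclideanSpace ℝ (Fin m))
    (hG : LinearIndependent ℝ G) (hg : g ≠ 0)
    (hGg : LinearIndependent ℝ (Fin.snoc G g : Fin (k + 1) → EuclideanSpace ℝ (Fin m)))
    (s : (Fin k → EuclideanSpace ℝ (Fin m)) → EuclideanSpace ℝ (Fin m) → (Fin k → ℝ))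
    (hs : ∀ (G' : Fin k → EuclideanSpace ℝ (Fin m)) (b' : EuclideanSpace ℝ (Fin m)),
      LinearIndependent ℝ G' →
        ((∀ i, 0 ≤ s G' b' i) ∧
         (∀ z : Fin k → ℝ, (∀ i, 0 ≤ z i) →
            ‖(∑ i, s G' b' i • G' i) - b'‖ ≤ ‖(∑ i, z i • G' i) - b'‖) ∧
         (∀ z : Fin k → ℝ, (∀ i, 0 ≤ z i) →
            (∀ w : Fin k → ℝ, (∀ i, 0 ≤ w i) →
              ‖(∑ i, z i • G' i) - b'‖ ≤ ‖(∑ i, w i • G' i) - b'‖) → z = s G' b'))) :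
    -- the candidate solution
    (let Gt : Fin k → EuclideanSpace ℝ (Fin m) := fun j => G j - (⟪g, G j⟫ / ‖g‖ ^ 2) • g
     let bt : EuclideanSpace ℝ (Fin m) := b - (⟪g, b⟫ / ‖g‖ ^ 2) • g
     let ystar : ℝ := (max ⟪g, b - ∑ i, s Gt bt i • G i⟫ 0) / ‖g‖ ^ 2
     let Ystar : Fin k → ℝ := s G (b - ystar • g)
     (0 ≤ ystar) ∧ (∀ i, 0 ≤ Ystar i) ∧
     (∀ (z : Fin k → ℝ) (u : ℝ), (∀ i, 0 ≤ z i) → 0 ≤ u →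
        ‖(∑ i, Ystar i • G i) + ystar • g - b‖ ≤ ‖(∑ i, z i • G i) + u • g - b‖) ∧
     (∀ (y : Fin k → ℝ) (t : ℝ), (∀ i, 0 ≤ y i) → 0 ≤ t →
        (∀ (z : Fin k → ℝ) (u : ℝ), (∀ i, 0 ≤ z i) → 0 ≤ u →
          ‖(∑ i, y i • G i) + t • g - b‖ ≤ ‖(∑ i, z i • G i) + u • g - b‖) →
        t = ystar ∧ y = Ystar)) := by
  intro Gt bt ystar Ystar
  have hg2 : (0:ℝ) < ‖g‖^2 := pow_pos (norm_pos_iff.mpr hg) 2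
  have hg2' : (‖g‖:ℝ)^2 ≠ 0 := ne_of_gt hg2
  -- snoc linear independence extraction
  have hsnoc : ∀ (c : Fin k → ℝ) (lam : ℝ),
      (∑ i : Fin (k+1), (Fin.snoc c lam : Fin (k+1) → ℝ) i •
        (Fin.snoc G g : Fin (k+1) → EuclideanSpace ℝ (Fin m)) i)
        = (∑ j, c j • G j) + lam • g := by
    intro c lam
    rw [Fin.sum_univ_castSucc]
    simp
  have hindep : ∀ (c : Fin k → ℝ) (lam : ℝ),
      (∑ j, c j • G j) + lam • g = 0 → (∀ j, c j = 0) ∧ lam = 0 := by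
    intro c lam h
    have h2 := Fintype.linearIndependent_iff.mp hGg (Fin.snoc c lam) (by rw [hsnoc]; exact h)
    refine ⟨fun j => ?_, ?_⟩
    · have := h2 j.castSucc; simpa using this
    · have := h2 (Fin.last k); simpa using this
  -- Gt is linearly independent
  have hGtindep : LinearIndependent ℝ Gt := by
    rw [Fintype.linearIndependent_iff]
    intro c hc
    have e : ∑ j, c j • Gt j
        = (∑ j, c j • G j) + (-(∑ j, c j * (⟪g, G j⟫ / ‖g‖^2))) • g := by
      simp only [Gt, smul_sub, smul_smul]
      rw [Finset.sum_sub_distrib, neg_smul, Finset.sum_smul, sub_eq_add_neg]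
    rw [e] at hc
    exact fun j => (hindep _ _ hc).1 j
  -- the two NNLS solutions
  obtain ⟨hyhpos, hyhmin, hyhuniq⟩ := hs Gt bt hGtindep
  set yh : Fin k → ℝ := s Gt bt with hyh
  set β : ℝ := ⟪g, b - ∑ i, yh i • G i⟫ with hβ
  have hystar : ystar = max β 0 / ‖g‖^2 := rfl
  have hystar0 : 0 ≤ ystar := by rw [hystar]; positivity
  obtain ⟨hYpos, hYmin, hYuniq⟩ := hs G (b - ystar • g) hG
  have hYstar : Ystar = s G (b - ystar • g) := rfl
  -- KKT conditions
  have hGne : ∀ i, G i ≠ 0 := fun i => hG.ne_zero i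
  have hGtne : ∀ i, Gt i ≠ 0 := fun i => hGtindep.ne_zero i
  set S : EuclideanSpace ℝ (Fin m) := (∑ j, yh j • Gt j) - bt with hS
  set R : EuclideanSpace ℝ (Fin m) := (∑ j, Ystar j • G j) - (b - ystar • g) with hRd
  have hKS : ∀ i, 0 ≤ ⟪Gt i, S⟫ ∧ yh i * ⟪Gt i, S⟫ = 0 := fun i =>
    kkt Gt bt yh hyhpos hyhmin hGtne i
  have hKR : ∀ i, 0 ≤ ⟪G i, R⟫ ∧ Ystar i * ⟪G i, R⟫ = 0 := fun i =>
    kkt G (b - ystar • g) Ystar hYpos hYmin hGne i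
  -- g is orthogonal to everything tilde
  have hgGt : ∀ j, ⟪g, Gt j⟫ = 0 := by
    intro j
    simp only [Gt]
    rw [inner_sub_right, real_inner_smul_right, real_inner_self_eq_norm_sq]
    field_simp
    ring
  have hgbt : ⟪g, bt⟫ = 0 := by
    simp only [bt]
    rw [inner_sub_right, real_inner_smul_right, real_inner_self_eq_norm_sq]
    field_simp
    ring
  have hgS : ⟪g, S⟫ = 0 := by
    rw [hS, inner_sub_right, inner_sum, hgbt, sub_zero]
    exact Finset.sum_eq_zero fun j _ => by rw [real_inner_smul_right, hgGt, mul_zero]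
  have hGjS : ∀ j, ⟪G j, S⟫ = ⟪Gt j, S⟫ := by
    intro j
    have : ⟪Gt j, S⟫ = ⟪G j, S⟫ - (⟪g, G j⟫ / ‖g‖^2) * ⟪g, S⟫ := by
      simp only [Gt]
      rw [inner_sub_left, real_inner_smul_left]
    rw [this, hgS]; ring
  -- β in terms of sums
  have sA : ∀ (c : Fin k → ℝ) (v : EuclideanSpace ℝ (Fin m)),
      ⟪∑ j, c j • G j, v⟫ = ∑ j, c j * ⟪G j, v⟫ := by
    intro c v
    rw [sum_inner]
    exact Finset.sum_congr rfl fun j _ => real_inner_smul_left _ _ _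
  have hβsum : β = ⟪g, b⟫ - ∑ j, yh j * ⟪g, G j⟫ := by
    rw [hβ, inner_sub_right, inner_sum]
    congr 1
    exact Finset.sum_congr rfl fun j _ => real_inner_smul_right _ _ _
  -- key identity R - S
  set μ : ℝ := ystar - β / ‖g‖^2 with hμ
  have hRS : R - S = ((∑ j, Ystar j • G j) - (∑ j, yh j • G j)) + μ • g := by
    have e : ∑ j, yh j • Gt j
        = (∑ j, yh j • G j) - (∑ j, yh j * (⟪g, G j⟫ / ‖g‖^2)) • g := by
      simp only [Gt, smul_sub, smul_smul]
      rw [Finset.sum_sub_distrib, Finset.sum_smul]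
    have hscal : (∑ j, yh j * (⟪g, G j⟫ / ‖g‖^2)) = (∑ j, yh j * ⟪g, G j⟫) / ‖g‖^2 := by
      rw [Finset.sum_div]
      exact Finset.sum_congr rfl fun j _ => (mul_div_assoc (yh j) _ _).symm
    have hμeq : μ = ystar + ((∑ j, yh j * (⟪g, G j⟫ / ‖g‖^2)) - ⟪g, b⟫ / ‖g‖^2) := by
      rw [hμ, hβsum, hscal]; ring
    rw [hRd, hS, e, hμeq]
    simp only [bt]
    module
  -- the central inequality
  have hcentral : ‖R - S‖^2 ≤ μ * ⟪g, R⟫ := by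
    have h1 : ‖R - S‖^2 = ⟪R - S, R⟫ - ⟪R - S, S⟫ := by
      rw [← inner_sub_right, real_inner_self_eq_norm_sq]
    have h2 : ⟪R - S, R⟫
        = ((∑ j, Ystar j * ⟪G j, R⟫) - (∑ j, yh j * ⟪G j, R⟫)) + μ * ⟪g, R⟫ := by
      rw [hRS, inner_add_left, inner_sub_left, sA, sA, real_inner_smul_left]
    have h3 : ⟪R - S, S⟫
        = ((∑ j, Ystar j * ⟪Gt j, S⟫) - (∑ j, yh j * ⟪Gt j, S⟫)) := by
      rw [hRS, inner_add_left, inner_sub_left, sA, sA, real_inner_smul_left, hgS, mul_zero,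
        add_zero]
      congr 1 <;> exact Finset.sum_congr rfl fun j _ => by rw [hGjS]
    have hA : (∑ j, Ystar j * ⟪G j, R⟫) = 0 :=
      Finset.sum_eq_zero fun j _ => (hKR j).2
    have hB : 0 ≤ ∑ j, yh j * ⟪G j, R⟫ :=
      Finset.sum_nonneg fun j _ => mul_nonneg (hyhpos j) (hKR j).1
    have hC : 0 ≤ ∑ j, Ystar j * ⟪Gt j, S⟫ :=
      Finset.sum_nonneg fun j _ => mul_nonneg (hYpos j) (hKS j).1
    have hD : (∑ j, yh j * ⟪Gt j, S⟫) = 0 :=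
      Finset.sum_eq_zero fun j _ => (hKS j).2
    rw [h1, h2, h3, hA, hD]
    linarith
  -- sign facts about ⟪g, R⟫
  have hReqS_of : ‖R - S‖^2 ≤ 0 → R = S := by
    intro h
    have h0 : ‖R - S‖^2 = 0 := le_antisymm h (by positivity)
    have : ‖R - S‖ = 0 := by
      have := sq_eq_zero_iff.mp h0
      exact this
    rw [norm_eq_zero, sub_eq_zero] at this
    exact this
  have hgR : 0 ≤ ⟪g, R⟫ ∧ ystar * ⟪g, R⟫ = 0 := by
    rcases le_or_gt β 0 with hβle | hβgt
    · have hy0 : ystar = 0 := by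
        rw [hystar, max_eq_right hβle, zero_div]
      have hμ0 : 0 ≤ μ := by
        rw [hμ, hy0]
        have : β / ‖g‖^2 ≤ 0 := div_nonpos_of_nonpos_of_nonneg hβle (le_of_lt hg2)
        linarith
      constructor
      · by_contra hlt
        push_neg at hlt
        have : μ * ⟪g, R⟫ ≤ 0 := mul_nonpos_of_nonneg_of_nonpos hμ0 (le_of_lt hlt)
        have hRS0 := hReqS_of (le_trans hcentral this)
        rw [hRS0, hgS] at hlt
        exact lt_irrefl 0 hlt
      · rw [hy0]; ring
    · have hy' : ystar = β / ‖g‖^2 := by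
        rw [hystar, max_eq_left (le_of_lt hβgt)]
      have hμ0 : μ = 0 := by rw [hμ, hy']; ring
      have hRS0 := hReqS_of (by rw [hμ0] at hcentral; simpa using hcentral)
      rw [hRS0, hgS]
      exact ⟨le_refl 0, by ring⟩
  -- vector identity for candidate residual
  have hRvec : (∑ i, Ystar i • G i) + ystar • g - b = R := by
    rw [hRd]; abel
  -- main optimality
  have hopt : ∀ (z : Fin k → ℝ) (u : ℝ), (∀ i, 0 ≤ z i) → 0 ≤ u →
      ‖(∑ i, Ystar i • G i) + ystar • g - b‖ ≤ ‖(∑ i, z i • G i) + u • g - b‖ := by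
    intro z u hz hu
    set d : EuclideanSpace ℝ (Fin m) :=
      ((∑ j, z j • G j) - (∑ j, Ystar j • G j)) + (u - ystar) • g with hd
    have hzvec : (∑ i, z i • G i) + u • g - b = R + d := by
      rw [hRd, hd, sub_smul]; abel
    have hdR : 0 ≤ ⟪d, R⟫ := by
      have e : ⟪d, R⟫ = ((∑ j, z j * ⟪G j, R⟫) - (∑ j, Ystar j * ⟪G j, R⟫))
          + (u * ⟪g, R⟫ - ystar * ⟪g, R⟫) := by
        rw [hd, inner_add_left, inner_sub_left, sA, sA, real_inner_smul_left, sub_mul]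
      have hA : (∑ j, Ystar j * ⟪G j, R⟫) = 0 :=
        Finset.sum_eq_zero fun j _ => (hKR j).2
      have hE : 0 ≤ ∑ j, z j * ⟪G j, R⟫ :=
        Finset.sum_nonneg fun j _ => mul_nonneg (hz j) (hKR j).1
      have hF : 0 ≤ u * ⟪g, R⟫ := mul_nonneg hu hgR.1
      rw [e, hA, hgR.2]
      linarith
    rw [hRvec, hzvec]
    have h3 : ‖R + d‖^2 = ‖R‖^2 + 2 * ⟪R, d⟫ + ‖d‖^2 := norm_add_sq_real R d
    have h4 : ⟪R, d⟫ = ⟪d, R⟫ := real_inner_comm d R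
    have h5 : ‖R‖^2 ≤ ‖R + d‖^2 := by
      rw [h3, h4]
      nlinarith [sq_nonneg ‖d‖]
    exact le_of_pow_le_pow_left₀ two_ne_zero (norm_nonneg _) h5
  refine ⟨hystar0, hYpos, hopt, ?_⟩
  -- uniqueness
  intro y t hy ht hmin'
  set v1 : EuclideanSpace ℝ (Fin m) := (∑ i, y i • G i) + t • g - b with hv1
  set v2 : EuclideanSpace ℝ (Fin m) := (∑ i, Ystar i • G i) + ystar • g - b with hv2
  have h12 : ‖v1‖ ≤ ‖v2‖ := hmin' Ystar ystar hYpos hystar0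
  have h21 : ‖v2‖ ≤ ‖v1‖ := hopt y t hy ht
  have heq : ‖v1‖ = ‖v2‖ := le_antisymm h12 h21
  -- midpoint
  have hsum2 : (∑ i, ((y i + Ystar i)/2) • G i)
      = (1/2:ℝ) • (∑ i, y i • G i) + (1/2:ℝ) • (∑ i, Ystar i • G i) := by
    rw [Finset.smul_sum, Finset.smul_sum, ← Finset.sum_add_distrib]
    refine Finset.sum_congr rfl fun j _ => ?_
    rw [smul_smul, smul_smul, ← add_smul]
    congr 1
    ring
  have hmid : (∑ i, ((y i + Ystar i)/2) • G i) + ((t + ystar)/2) • g - b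
      = (1/2:ℝ) • (v1 + v2) := by
    rw [hsum2, hv1, hv2]
    module
  have hmidle : ‖v1‖ ≤ (1/2:ℝ) * ‖v1 + v2‖ := by
    have h := hmin' (fun i => (y i + Ystar i)/2) ((t + ystar)/2)
      (fun i => by have := hy i; have := hYpos i; positivity)
      (by have := ht; have := hystar0; positivity)
    rw [hmid, norm_smul] at h
    simpa using h
  have hpar := parallelogram_law_with_norm ℝ v1 v2
  have hv12 : ‖v1 - v2‖ = 0 := by
    nlinarith [norm_nonneg (v1 - v2), norm_nonneg (v1 + v2), norm_nonneg v1]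
  have hveq : v1 = v2 := by
    rwa [norm_eq_zero, sub_eq_zero] at hv12
  have hdiff : (∑ j, (y j - Ystar j) • G j) + (t - ystar) • g = v1 - v2 := by
    have e : (∑ j, (y j - Ystar j) • G j)
        = (∑ j, y j • G j) - (∑ j, Ystar j • G j) := by
      rw [← Finset.sum_sub_distrib]
      exact Finset.sum_congr rfl fun j _ => sub_smul _ _ _
    rw [e, hv1, hv2]
    module
  obtain ⟨hc, hlam⟩ := hindep _ _ (by rw [hdiff, hveq, sub_self])
  exact ⟨sub_eq_zero.mp hlam, funext fun j => sub_eq_zero.mp (hc j)⟩
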